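/- Let N be cyclic of order 2^e (e ≥ 2) with generator σ. Let G be a transitive, non-regular subgroup of Hol(N). Then the centre Z(G) contains σ^{2^{e-1}} and Z(G) is cyclic. -/

import Mathlib

/-- The holomorph `Hol(N) = N ⋊ Aut(N)`. -/
abbrev Hol (N : Type*) [Group N] : Type _ :=
  N ⋊[MonoidHom.id (MulAut N)] MulAut N

/-- The natural action of `Hol(N)` on `N`: `(n, φ) • x = n · φ(x)`. -/
def holAct {N : Type*} [Group N] (g : Hol N) (x : N) : N :=
  g.left * g.right x

/-- A subgroup of `Hol(N)` is transitive if its natural action on `N` is transitive. -/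
def IsTransitiveSub {N : Type*} [Group N] (G : Subgroup (Hol N)) : Prop :=
  ∀ x y : N, ∃ g ∈ G, holAct g x = y

/-- A transitive subgroup is regular if the stabiliser of `1_N` in it is trivial. -/
def IsRegularSub {N : Type*} [Group N] (G : Subgroup (Hol N)) : Prop :=
  IsTransitiveSub G ∧ ∀ g ∈ G, holAct g 1 = 1 → g = 1


lemma aux_two_pow_dvd (a : ℤ) (ha : ¬ (2:ℤ) ∣ a) :
    ∀ m : ℕ, 1 ≤ m → (2:ℤ)^(m+1) ∣ a^(2^m) - 1 := by
  have haodd : Odd a := Int.odd_iff.mpr (by omega)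
  intro m hm
  induction m, hm using Nat.le_induction with
  | base =>
    obtain ⟨k, hk⟩ := haodd
    exact ⟨k*k+k, by subst hk; ring⟩
  | succ n hn ih =>
    obtain ⟨s, hs⟩ := haodd.pow (n := 2^n)
    have h1 : a^(2^(n+1)) - 1 = (a^(2^n) - 1) * (a^(2^n) + 1) := by
      rw [pow_succ, pow_mul]; ring
    have h2 : (2:ℤ)^(n+1+1) = 2^(n+1) * 2 := by ring
    rw [h1, h2]
    exact mul_dvd_mul ih ⟨s+1, by rw [hs]; ring⟩

lemma aux_cyclic {H : Type*} [CommGroup H] [Finite H] (hp : IsPGroup 2 H) (w : H)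
    (hw : ∀ u : H, u * u = 1 → u ≠ 1 → u = w) : IsCyclic H := by
  have horder : ∀ x : H, ∃ k, orderOf x = 2^k := by
    intro x
    obtain ⟨m, hm⟩ := hp x
    obtain ⟨k, -, hk⟩ := (Nat.dvd_prime_pow Nat.prime_two).mp (orderOf_dvd_of_pow_eq_one hm)
    exact ⟨k, hk⟩
  obtain ⟨z₀, hz₀⟩ := Finite.exists_max (fun x : H => orderOf x)
  obtain ⟨k, hk⟩ := horder z₀
  constructor
  refine ⟨z₀, ?_⟩
  have main : ∀ n, ∀ y : H, orderOf y = n → y ∈ Subgroup.zpowers z₀ := by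
    intro n
    induction n using Nat.strong_induction_on with
    | _ n ih =>
      intro y hyn
      by_cases hy1 : y = 1
      · subst hy1; exact Subgroup.one_mem _
      obtain ⟨t, ht⟩ := horder y
      have ht1 : 1 ≤ t := by
        rcases Nat.eq_zero_or_pos t with h | h
        · exact absurd (orderOf_eq_one_iff.mp (by rw [ht, h, pow_zero])) hy1
        · exact h
      have htk : t ≤ k := by
        have := hz₀ y
        rw [ht, hk] at this
        exact (Nat.pow_le_pow_iff_right one_lt_two).mp this
      have hk1 : 1 ≤ k := le_trans ht1 htk
      have hy2 : orderOf (y^2) = 2^(t-1) := by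
        rw [orderOf_pow, ht]
        have hg : Nat.gcd (2^t) 2 = 2 := Nat.gcd_eq_right (dvd_pow_self 2 (by omega))
        rw [hg]
        rw [show (2:ℕ)^t = 2^(t-1)*2 by rw [← pow_succ]; congr 1; omega]
        exact Nat.mul_div_cancel _ (by norm_num)
      have hlt : 2^(t-1) < n := by
        rw [← hyn, ht]
        exact Nat.pow_lt_pow_right one_lt_two (by omega)
      obtain ⟨m, hm⟩ := Subgroup.mem_zpowers_iff.mp (ih _ hlt (y^2) hy2)
      have hwz : z₀ ^ (2^(k-1) : ℕ) = w := by
        apply hw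
        · rw [← pow_add, show 2^(k-1) + 2^(k-1) = 2^k by rw [← two_mul, ← pow_succ']; congr 1; omega,
            ← hk, pow_orderOf_eq_one]
        · exact pow_ne_one_of_lt_orderOf (by positivity) (by rw [hk]; exact Nat.pow_lt_pow_right one_lt_two (by omega))
      rcases Int.even_or_odd m with ⟨m', hm'⟩ | ⟨m', hm'⟩
      · -- even
        set u := y * (z₀ ^ m')⁻¹ with hu
        have h0 : u * u = (y*y) * ((z₀ ^ m') * (z₀ ^ m'))⁻¹ := by
          rw [hu, mul_inv]; exact mul_mul_mul_comm y _ y _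
        have hu2 : u * u = 1 := by
          rw [h0, ← zpow_add, ← hm', hm, ← pow_two]
          simp
        rcases eq_or_ne u 1 with h1 | h1
        · have hy : y = u * z₀ ^ m' := by rw [hu, inv_mul_cancel_right]
          rw [hy, h1, one_mul]; exact Subgroup.zpow_mem _ (Subgroup.mem_zpowers _) _
        · have huw := hw u hu2 h1
          have hy : y = u * z₀ ^ m' := by rw [hu, inv_mul_cancel_right]
          rw [hy, huw]
          exact Subgroup.mul_mem _ (hwz ▸ Subgroup.pow_mem _ (Subgroup.mem_zpowers z₀) _)
            (Subgroup.zpow_mem _ (Subgroup.mem_zpowers _) _)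
      · -- odd : contradiction with maximality
        exfalso
        set u := y * (z₀ ^ m')⁻¹ with hu
        have h0 : u * u = (y*y) * ((z₀ ^ m') * (z₀ ^ m'))⁻¹ := by
          rw [hu, mul_inv]; exact mul_mul_mul_comm y _ y _
        have hu2 : u * u = z₀ := by
          rw [h0, ← zpow_add, show y*y = z₀^m by rw [← sq, ← hm], ← zpow_sub,
            show m - (m'+m') = (1:ℤ) by omega, zpow_one]
        obtain ⟨s, hs⟩ := horder u
        have hsk : s ≤ k := (Nat.pow_le_pow_iff_right one_lt_two).mp
          (by rw [← hs, ← hk]; exact hz₀ u)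
        have h1 : u^((2:ℕ)^k) = z₀^((2:ℕ)^(k-1)) := by
          rw [show (2:ℕ)^k = 2*2^(k-1) by rw [← pow_succ']; congr 1; omega, pow_mul, pow_two, hu2]
        have h2 : u^((2:ℕ)^k) = 1 := by
          rw [show (2:ℕ)^k = 2^s * 2^(k-s) by rw [← pow_add]; congr 1; omega, pow_mul, ← hs,
            pow_orderOf_eq_one, one_pow]
        exact pow_ne_one_of_lt_orderOf (by positivity)
          (by rw [hk]; exact Nat.pow_lt_pow_right one_lt_two (by omega)) (h1.symm.trans h2)
  intro x
  exact main (orderOf x) x rfl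

/-- Let `N` be cyclic of order `2^e` (`e ≥ 2`) with generator `σ`,
and let `G` be a transitive non-regular subgroup of `Hol(N)`. Then `Z(G)` contains
`σ^{2^{e-1}}` and `Z(G)` is cyclic. -/
theorem center_of_nonregular_transitive {N : Type*} [Group N]
    (e : ℕ) (he : 2 ≤ e)
    (σ : N) (hgen : ∀ x : N, x ∈ Subgroup.zpowers σ) (hcard : Nat.card N = 2 ^ e)
    (G : Subgroup (Hol N)) (hG : IsTransitiveSub G) (hnr : ¬ IsRegularSub G) :
    (∃ hmem : (SemidirectProduct.inl (σ ^ 2 ^ (e - 1)) : Hol N) ∈ G,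
        (⟨SemidirectProduct.inl (σ ^ 2 ^ (e - 1)), hmem⟩ : G) ∈
          Subgroup.center G) ∧
      IsCyclic ↥(Subgroup.center ↥G) := by
  have hfin : Finite N := Nat.finite_of_card_ne_zero (by rw [hcard]; positivity)
  haveI : IsCyclic N := ⟨⟨σ, hgen⟩⟩
  have horder : orderOf σ = 2^e := (orderOf_eq_card_of_forall_mem_zpowers hgen).trans hcard
  have hpow1 : ∀ k : ℤ, σ ^ k = 1 ↔ (2:ℤ)^e ∣ k := by
    intro k
    rw [← orderOf_dvd_iff_zpow_eq_one, horder]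
    norm_cast
  have hexp : ∀ x : N, ∃ j : ℤ, x = σ ^ j := by
    intro x
    obtain ⟨j, hj⟩ := Subgroup.mem_zpowers_iff.mp (hgen x)
    exact ⟨j, hj.symm⟩
  have hdvd1 : ∀ (x : N) (k : ℤ), (2:ℤ)^e ∣ k → x ^ k = 1 := by
    intro x k hk
    obtain ⟨j, rfl⟩ := hexp x
    rw [← zpow_mul, hpow1]
    exact hk.mul_left j
  have hσdiff : ∀ X Y : ℤ, σ ^ X = σ ^ Y → (2:ℤ)^e ∣ X - Y := by
    intro X Y h
    rw [← hpow1, zpow_sub, h, mul_inv_cancel]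
  have haut : ∀ φ : MulAut N, ∃ a : ℤ, (∀ x, φ x = x ^ a) ∧ ¬ (2:ℤ) ∣ a := by
    intro φ
    obtain ⟨a, ha⟩ := MonoidHom.map_cyclic (φ : N →* N)
    refine ⟨a, fun x => ha x, ?_⟩
    intro h2a
    obtain ⟨c, hc⟩ := hexp (φ.symm σ)
    have h1 : σ = σ ^ (c * a) := by
      conv_lhs => rw [← φ.apply_symm_apply σ, hc]
      rw [show φ (σ ^ c) = (σ^c)^a from ha _, ← zpow_mul]
    have hd : (2:ℤ)^e ∣ c*a - 1 := by
      have := hσdiff (c*a) 1 (by rw [zpow_one, ← h1])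
      simpa using this
    have h2 : (2:ℤ) ∣ c*a - 1 := dvd_trans (dvd_pow_self 2 (by omega : e ≠ 0)) hd
    have h3 : (2:ℤ) ∣ c*a := h2a.mul_left c
    omega
  -- τ facts
  set τ : N := σ ^ 2 ^ (e - 1) with hτdef
  have hτ1 : τ * τ = 1 := by
    rw [hτdef, ← pow_add, show 2^(e-1) + 2^(e-1) = 2^e by
      rw [← two_mul, ← pow_succ']; congr 1; omega, ← horder, pow_orderOf_eq_one]
  have hτne : τ ≠ 1 :=
    pow_ne_one_of_lt_orderOf (by positivity)
      (by rw [horder]; exact Nat.pow_lt_pow_right one_lt_two (by omega))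
  have hcast : ((2:ℤ)^(e-1)) = ((2^(e-1) : ℕ) : ℤ) := by push_cast; ring
  have hsq2 : ∀ x : N, x * x = 1 → x = 1 ∨ x = τ := by
    intro x hx
    obtain ⟨j, rfl⟩ := hexp x
    have hdv : (2:ℤ)^e ∣ j + j := by
      rw [← hpow1, zpow_add, hx]
    have hdv2 : (2:ℤ)^(e-1) * 2 ∣ j * 2 := by
      rw [show (2:ℤ)^(e-1) * 2 = 2^e by rw [← pow_succ]; congr 1; omega]
      exact (by rw [mul_two]; exact hdv)
    obtain ⟨q, hq⟩ := (mul_dvd_mul_iff_right (by norm_num : (2:ℤ) ≠ 0)).mp hdv2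
    have hxq : σ ^ j = τ ^ q := by
      rw [hτdef, ← zpow_natCast σ (2^(e-1)), ← zpow_mul, ← hcast, ← hq]
    rcases Int.even_or_odd q with ⟨r, hr⟩ | ⟨r, hr⟩
    · left
      rw [hxq, hr, show r + r = 2 * r by ring, zpow_mul,
        show (τ:N) ^ (2:ℤ) = τ * τ by rw [zpow_two], hτ1, one_zpow]
    · right
      rw [hxq, hr, zpow_add, zpow_one, zpow_mul,
        show (τ:N) ^ (2:ℤ) = τ * τ by rw [zpow_two], hτ1, one_zpow, one_mul]
  -- stabilizer element
  have hleft1 : ∀ g : Hol N, holAct g 1 = g.left := by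
    intro g; simp [holAct]
  have hstab : ∃ g₀ : Hol N, g₀ ∈ G ∧ g₀.left = 1 ∧ g₀ ≠ 1 := by
    by_contra h
    push_neg at h
    refine hnr ⟨hG, fun g hg hact => ?_⟩
    exact h g hg ((hleft1 g).symm.trans hact)
  obtain ⟨g₀, hg₀G, hg₀l, hg₀ne⟩ := hstab
  obtain ⟨b, hb, hbodd⟩ := haut g₀.right
  have hbnd : ¬ (2:ℤ)^e ∣ b - 1 := by
    intro hd
    apply hg₀ne
    have hr1 : g₀.right = 1 := by
      apply MulEquiv.ext
      intro x
      rw [show g₀.right x = x ^ b from hb x,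
        show b = (b-1) + 1 by ring, zpow_add, hdvd1 x _ hd, one_mul, zpow_one]
      rfl
    ext
    · exact hg₀l.trans rfl
    · rw [hr1]; rfl
  -- transitivity element over σ
  obtain ⟨g₁, hg₁G, hg₁act⟩ := hG 1 σ
  have hg₁l : g₁.left = σ := by rw [← hleft1, hg₁act]
  obtain ⟨c, hc, hcodd⟩ := haut g₁.right
  -- KEY LEMMA: any central involution is inl τ
  have key : ∀ u : ↥G, u ∈ Subgroup.center ↥G → u * u = 1 → u ≠ 1 →
      (u : Hol N) = SemidirectProduct.inl τ := by
    intro u hu huu hune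
    obtain ⟨a, ha, haodd⟩ := haut (↑u : Hol N).right
    obtain ⟨j, hj⟩ := hexp (↑u : Hol N).left
    have hW2 : (u : Hol N) * (u : Hol N) = 1 := by
      rw [← Subgroup.coe_mul, huu, OneMemClass.coe_one]
    have hl2 : (u:Hol N).left * (u:Hol N).right (u:Hol N).left = 1 := by
      have := congrArg SemidirectProduct.left hW2
      simpa using this
    have hr2 : (u:Hol N).right * (u:Hol N).right = 1 := by
      have := congrArg SemidirectProduct.right hW2
      simpa using this
    have hjaa : (2:ℤ)^e ∣ j * (1 + a) := by
      have hl2' : σ ^ (j + j*a) = 1 := by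
        calc σ ^ (j + j*a) = σ^j * σ^(j*a) := zpow_add σ j (j*a)
          _ = σ^j * (σ^j)^a := by rw [zpow_mul]
          _ = σ^j * (u:Hol N).right (σ^j) := by rw [ha]
          _ = (u:Hol N).left * (u:Hol N).right (u:Hol N).left := by rw [← hj]
          _ = 1 := hl2
      have := (hpow1 _).mp hl2'
      rw [show j*(1+a) = j + j*a by ring]
      exact this
    have haa1 : (2:ℤ)^e ∣ a*a - 1 := by
      have h1 : (u:Hol N).right ((u:Hol N).right σ) = σ := by
        have := congrArg (fun ψ : MulAut N => ψ σ) hr2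
        simpa using this
      have h2 : σ ^ (a*a) = σ ^ (1:ℤ) := by
        rw [zpow_one]
        calc σ ^ (a*a) = (σ^a)^a := by rw [zpow_mul]
          _ = ((u:Hol N).right σ)^a := by rw [ha]
          _ = (u:Hol N).right ((u:Hol N).right σ) := (ha _).symm
          _ = σ := h1
      simpa using hσdiff _ _ h2
    have hcent : ∀ g : Hol N, g ∈ G →
        (u:Hol N).left * (u:Hol N).right g.left = g.left * g.right (u:Hol N).left := by
      intro g hg
      have h0 := Subgroup.mem_center_iff.mp hu ⟨g, hg⟩
      have h1 := congrArg (fun v : ↥G => (v : Hol N).left) h0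
      simpa using h1.symm
    have hjb : (2:ℤ)^e ∣ j * (b - 1) := by
      have h2 : σ ^ j = σ ^ (j*b) := by
        calc σ^j = (u:Hol N).left * (u:Hol N).right g₀.left := by
              rw [hg₀l, map_one, mul_one, hj]
          _ = g₀.left * g₀.right (u:Hol N).left := hcent g₀ hg₀G
          _ = (σ^j)^b := by rw [hg₀l, one_mul, hj, hb]
          _ = σ^(j*b) := by rw [zpow_mul]
      rw [show j*(b-1) = j*b - j by ring]
      exact hσdiff _ _ h2.symm
    have hdag : (2:ℤ)^e ∣ (a - 1) - j * (c - 1) := by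
      have h2 : σ ^ (j + a) = σ ^ (1 + j*c) := by
        calc σ ^ (j+a) = σ^j * σ^a := zpow_add σ j a
          _ = (u:Hol N).left * (u:Hol N).right σ := by rw [hj, ha]
          _ = (u:Hol N).left * (u:Hol N).right g₁.left := by rw [hg₁l]
          _ = g₁.left * g₁.right (u:Hol N).left := hcent g₁ hg₁G
          _ = σ * (σ^j)^c := by rw [hg₁l, hj, hc]
          _ = σ^(1:ℤ) * σ^(j*c) := by rw [zpow_one, zpow_mul]
          _ = σ^(1+j*c) := (zpow_add σ 1 (j*c)).symm
      rw [show (a-1) - j*(c-1) = (j+a) - (1+j*c) by ring]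
      exact hσdiff _ _ h2
    by_cases hA : (2:ℤ)^e ∣ a - 1
    · -- the automorphism part is trivial
      have hφ1 : (u:Hol N).right = 1 := by
        apply MulEquiv.ext
        intro x
        rw [show (u:Hol N).right x = x ^ a from ha x,
          show a = (a-1) + 1 by ring, zpow_add, hdvd1 x _ hA, one_mul, zpow_one]
        rfl
      have hnn : (u:Hol N).left * (u:Hol N).left = 1 := by
        have := hl2
        rw [hφ1] at this
        simpa using this
      rcases hsq2 _ hnn with h | h
      · exfalso
        apply hune
        have hW1 : (u : Hol N) = 1 := by
          ext
          · rw [h]; rfl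
          · rw [hφ1]; rfl
        exact Subtype.ext hW1
      · ext
        · rw [h]; simp
        · rw [hφ1]; simp
    · exfalso
      have h2a1 : (2:ℤ) ∣ a - 1 := by omega
      by_cases h4 : (4:ℤ) ∣ a - 1
      · -- a ≡ 1 mod 4
        have h2a2 : (2:ℤ) ∣ a + 1 := by omega
        obtain ⟨v, hv2⟩ := h2a2
        have hvodd : ¬ (2:ℤ) ∣ v := by
          intro ⟨s, hs⟩
          omega
        have hpe : (2:ℤ)^e = 2^(e-1) * 2 := by
          rw [← pow_succ]; congr 1; omega
        have hd2 : (2:ℤ)^(e-1) ∣ (a-1) := by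
          refine Int.prime_two.pow_dvd_of_dvd_mul_right _ hvodd ?_
          refine (mul_dvd_mul_iff_right (by norm_num : (2:ℤ) ≠ 0)).mp ?_
          rw [show (a-1) * v * 2 = a*a - 1 by rw [show a*a-1 = (a-1)*(a+1) by ring, hv2]; ring,
            ← hpe]
          exact haa1
        have hd3 : (2:ℤ)^(e-1) ∣ j := by
          refine Int.prime_two.pow_dvd_of_dvd_mul_right _ hvodd ?_
          refine (mul_dvd_mul_iff_right (by norm_num : (2:ℤ) ≠ 0)).mp ?_
          rw [show j * v * 2 = j * (1+a) by rw [show (1:ℤ)+a = a+1 from by ring, hv2]; ring, ← hpe]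
          exact hjaa
        have hd4 : (2:ℤ)^e ∣ j*(c-1) := by
          rw [hpe]
          exact mul_dvd_mul hd3 (by omega : (2:ℤ) ∣ c - 1)
        apply hA
        have := dvd_add hdag hd4
        simpa using this
      · -- a ≡ 3 mod 4
        have h4e : (4:ℤ) ∣ (2:ℤ)^e := by
          rw [show (4:ℤ) = 2^2 by norm_num]
          exact pow_dvd_pow 2 he
        have hjodd : ¬ (2:ℤ) ∣ j := by
          intro h2j
          apply h4
          have h2c : (2:ℤ) ∣ c - 1 := by omega
          obtain ⟨j', rfl⟩ := h2j
          obtain ⟨c', hc'⟩ := h2c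
          have h41 : (4:ℤ) ∣ 2*j'*(c-1) := by
            rw [hc']
            exact ⟨j'*c', by ring⟩
          have h42 := h4e.trans hdag
          omega
        apply hbnd
        refine Int.prime_two.pow_dvd_of_dvd_mul_left _ hjodd ?_
        exact hjb
  -- Hol N is a finite 2-group
  haveI : Finite (Hol N) := by
    refine Finite.of_injective (fun g : Hol N => (g.left, g.right)) ?_
    intro g h hgh
    obtain ⟨h1, h2⟩ := Prod.mk.injEq .. ▸ hgh
    ext
    · exact h1
    · rw [h2]
  have hautpow : ∀ φ : MulAut N, φ ^ (2^(e-1) : ℕ) = 1 := by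
    intro φ
    obtain ⟨a, ha, haodd⟩ := haut φ
    have happ : ∀ (m : ℕ) (x : N), (φ^m) x = x ^ (a^m : ℤ) := by
      intro m
      induction m with
      | zero => intro x; simp
      | succ m ih =>
        intro x
        rw [pow_succ']
        calc (φ * φ^m) x = φ ((φ^m) x) := rfl
          _ = ((φ^m) x) ^ a := ha _
          _ = (x ^ (a^m : ℤ)) ^ a := by rw [ih]
          _ = x ^ ((a^m : ℤ) * a) := (zpow_mul x _ a).symm
          _ = x ^ ((a^(m+1) : ℤ)) := by rw [pow_succ]
    have hdva : (2:ℤ)^e ∣ a^(2^(e-1) : ℕ) - 1 := by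
      have := aux_two_pow_dvd a haodd (e-1) (by omega)
      rwa [show e-1+1 = e by omega] at this
    apply MulEquiv.ext
    intro x
    rw [happ]
    rw [show (a^(2^(e-1):ℕ) : ℤ) = (a^(2^(e-1):ℕ) - 1) + 1 by ring, zpow_add,
      hdvd1 x _ hdva, one_mul, zpow_one]
    rfl
  have hN2 : ∀ x : N, x ^ ((2:ℕ)^e) = 1 := by
    intro x
    obtain ⟨j, rfl⟩ := hexp x
    rw [← zpow_natCast, ← zpow_mul, hpow1]
    exact ⟨j, by push_cast; ring⟩
  have hispg : IsPGroup 2 (Hol N) := by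
    intro g
    refine ⟨(e-1) + e, ?_⟩
    rw [pow_add, pow_mul]
    have hr : (g ^ ((2:ℕ)^(e-1))).right = 1 := by
      have : (g ^ ((2:ℕ)^(e-1))).right = g.right ^ ((2:ℕ)^(e-1)) := by
        have := map_pow (SemidirectProduct.rightHom) g ((2:ℕ)^(e-1))
        simpa using this
      rw [this]
      exact hautpow _
    have hinl : g ^ ((2:ℕ)^(e-1)) = SemidirectProduct.inl ((g ^ ((2:ℕ)^(e-1))).left) := by
      ext
      · simp
      · rw [hr]; simp
    rw [hinl, ← map_pow, hN2, map_one]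
  haveI : Fact (Nat.Prime 2) := ⟨Nat.prime_two⟩
  have hispgG : IsPGroup 2 ↥G := hispg.to_subgroup G
  haveI : Nontrivial ↥G := by
    refine ⟨⟨g₀, hg₀G⟩, 1, ?_⟩
    intro hcontra
    exact hg₀ne (by simpa [Subtype.ext_iff] using hcontra)
  haveI hcnt : Nontrivial ↥(Subgroup.center ↥G) := hispgG.center_nontrivial
  obtain ⟨z, hz1⟩ := exists_ne (1 : ↥(Subgroup.center ↥G))
  have hyc : (z : ↥G) ∈ Subgroup.center ↥G := z.2
  have hy1 : (z : ↥G) ≠ 1 := by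
    intro h
    exact hz1 (Subtype.ext h)
  obtain ⟨k, hk⟩ : ∃ k, orderOf (z : ↥G) = 2^k := by
    obtain ⟨m, hm⟩ := hispgG (z : ↥G)
    obtain ⟨k, -, hk⟩ := (Nat.dvd_prime_pow Nat.prime_two).mp (orderOf_dvd_of_pow_eq_one hm)
    exact ⟨k, hk⟩
  have hk1 : 1 ≤ k := by
    rcases Nat.eq_zero_or_pos k with h | h
    · exact absurd (orderOf_eq_one_iff.mp (by rw [hk, h, pow_zero])) hy1
    · exact h
  set w : ↥G := (z : ↥G) ^ ((2:ℕ)^(k-1)) with hwdef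
  have hwc : w ∈ Subgroup.center ↥G := Subgroup.pow_mem _ hyc _
  have hww : w * w = 1 := by
    rw [hwdef, ← pow_add, show 2^(k-1) + 2^(k-1) = 2^k by
      rw [← two_mul, ← pow_succ']; congr 1; omega, ← hk, pow_orderOf_eq_one]
  have hwne : w ≠ 1 :=
    pow_ne_one_of_lt_orderOf (by positivity)
      (by rw [hk]; exact Nat.pow_lt_pow_right one_lt_two (by omega))
  have hwτ : (w : Hol N) = SemidirectProduct.inl τ := key w hwc hww hwne
  constructor
  · have hmem : (SemidirectProduct.inl τ : Hol N) ∈ G := hwτ ▸ w.2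
    refine ⟨hmem, ?_⟩
    have heq : (⟨SemidirectProduct.inl τ, hmem⟩ : ↥G) = w := Subtype.ext hwτ.symm
    rw [heq]
    exact hwc
  · open scoped IsMulCommutative in refine aux_cyclic (H := ↥(Subgroup.center ↥G)) (hispgG.to_subgroup (Subgroup.center ↥G)) ⟨w, hwc⟩ ?_
    intro v hv2 hv1
    have hv2' : (v : ↥G) * (v : ↥G) = 1 := by
      rw [← Subgroup.coe_mul, hv2, OneMemClass.coe_one]
    have hv1' : (v : ↥G) ≠ 1 := by
      intro h
      exact hv1 (Subtype.ext h)
    have := key (v : ↥G) v.2 hv2' hv1'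
    exact Subtype.ext (Subtype.ext (this.trans hwτ.symm))
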